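/- For every online algorithm ALG and all nonnegative round weights w_1, …, w_T, there exists a committing online algorithm A (one whose round-t matching contains every edge it previously selected that was revealed successful) whose expected reward is at least one half of the expected reward of ALG. -/

import Mathlib

open Finset

/-- A finite simple graph presented via an abstract edge type: each edge has a
set of exactly two endpoints, and distinct edges have distinct endpoint sets. -/
structure GraphEdges (V E : Type) where
  ends : E → Finset V
  card_ends : ∀ e, (ends e).card = 2
  ends_injective : Function.Injective ends

variable {V E : Type}

/-- A matching: a set of pairwise endpoint-disjoint edges. -/
def GraphEdges.IsMatching (G : GraphEdges V E) (M : Finset E) : Prop :=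
  ∀ e ∈ M, ∀ f ∈ M, e ≠ f → Disjoint (G.ends e) (G.ends f)

/-- `select` is an online algorithm: under each realization `ω` it selects a
matching in every round, and its round-`t` selection depends only on its own
selections in earlier rounds and on the realized values of the edges it
selected in those rounds. -/
def GraphEdges.IsOnline (G : GraphEdges V E) (select : (E → Bool) → ℕ → Finset E) : Prop :=
  (∀ ω t, G.IsMatching (select ω t)) ∧
  (∀ ω ω' t, (∀ s, s < t → ∀ e ∈ select ω s, ω' e = ω e) → select ω' t = select ω t)

/-- Probability of the sample graph `ω` under independent Bernoulli edges. -/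
def probOf [Fintype E] (p : E → ℝ) (ω : E → Bool) : ℝ :=
  ∏ e : E, if ω e then p e else 1 - p e

/-- Expected reward of an algorithm: the `w`-weighted expected number of
successful selected edges over rounds `0, …, T-1`. -/
noncomputable def expectedReward [Fintype E] [DecidableEq E] (p : E → ℝ) (w : ℕ → ℝ)
    (T : ℕ) (select : (E → Bool) → ℕ → Finset E) : ℝ :=
  ∑ ω : E → Bool, probOf p ω *
    ∑ t ∈ Finset.range T, w t * ((select ω t).filter (fun e => ω e)).card

/-- A committing algorithm: its round-`t` matching contains every edge it
selected in an earlier round that was revealed successful. -/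
def IsCommitting (select : (E → Bool) → ℕ → Finset E) : Prop :=
  ∀ ω t s, s < t → ∀ e ∈ select ω s, ω e = true → e ∈ select ω t

section
variable {V E : Type} [DecidableEq V] [Fintype E] [DecidableEq E]
variable (G : GraphEdges V E) (alg : (E → Bool) → ℕ → Finset E)

/-- One joint-run state: (committed set, ALG-probed-so-far, A-probed-so-far). -/
def runSt (r ω : E → Bool) : ℕ → Finset E × Finset E × Finset E
  | 0 => (∅, ∅, ∅)
  | (t+1) =>
    let s := runSt r ω t
    let M := alg (fun e => if e ∈ s.2.1 \ s.2.2 then r e else ω e) t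
    let nw := M.filter fun e => ∀ c ∈ s.1, Disjoint (G.ends e) (G.ends c)
    (((s.1 ∪ nw).filter fun e => ω e), s.2.1 ∪ M, s.2.2 ∪ (s.1 ∪ nw))

def Ct (r ω : E → Bool) (t : ℕ) : Finset E := (runSt G alg r ω t).1
def Pro (r ω : E → Bool) (t : ℕ) : Finset E := (runSt G alg r ω t).2.1
def AP (r ω : E → Bool) (t : ℕ) : Finset E := (runSt G alg r ω t).2.2
def nuAt (r ω : E → Bool) (t : ℕ) : E → Bool :=
  fun e => if e ∈ Pro G alg r ω t \ AP G alg r ω t then r e else ω e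
def Mt (r ω : E → Bool) (t : ℕ) : Finset E := alg (nuAt G alg r ω t) t
def nwt (r ω : E → Bool) (t : ℕ) : Finset E :=
  (Mt G alg r ω t).filter fun e => ∀ c ∈ Ct G alg r ω t, Disjoint (G.ends e) (G.ends c)
def Nt (r ω : E → Bool) (t : ℕ) : Finset E := Ct G alg r ω t ∪ nwt G alg r ω t

variable (r ω : E → Bool)

@[simp] lemma Ct_zero : Ct G alg r ω 0 = ∅ := rfl
@[simp] lemma Pro_zero : Pro G alg r ω 0 = ∅ := rfl
@[simp] lemma AP_zero : AP G alg r ω 0 = ∅ := rfl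
lemma Ct_succ (t : ℕ) : Ct G alg r ω (t+1) = (Nt G alg r ω t).filter (fun e => ω e) := rfl
lemma Pro_succ (t : ℕ) : Pro G alg r ω (t+1) = Pro G alg r ω t ∪ Mt G alg r ω t := rfl
lemma AP_succ (t : ℕ) : AP G alg r ω (t+1) = AP G alg r ω t ∪ Nt G alg r ω t := rfl
end

section
variable {V E : Type} [DecidableEq V] [Fintype E] [DecidableEq E]
variable (G : GraphEdges V E) (alg : (E → Bool) → ℕ → Finset E)
variable (r ω : E → Bool)

lemma Ct_subset_Nt (t : ℕ) : Ct G alg r ω t ⊆ Nt G alg r ω t := Finset.subset_union_left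

lemma mem_Ct_omega {t e} (h : e ∈ Ct G alg r ω t) : ω e = true := by
  cases t with
  | zero => simp [Ct_zero] at h
  | succ t => rw [Ct_succ] at h; simpa using (Finset.mem_filter.1 h).2

lemma Ct_mono {s t : ℕ} (h : s ≤ t) : Ct G alg r ω s ⊆ Ct G alg r ω t := by
  induction t with
  | zero => simpa [Nat.le_zero.1 h] using Finset.Subset.refl _
  | succ t ih =>
    rcases Nat.lt_or_ge s (t+1) with h' | h'
    · intro e he
      have he' : e ∈ Ct G alg r ω t := ih (Nat.lt_succ_iff.1 h') he
      rw [Ct_succ]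
      exact Finset.mem_filter.2 ⟨Ct_subset_Nt G alg r ω t he', mem_Ct_omega G alg r ω he'⟩
    · have : s = t+1 := le_antisymm h h'
      subst this; exact Finset.Subset.refl _

lemma Pro_mono {s t : ℕ} (h : s ≤ t) : Pro G alg r ω s ⊆ Pro G alg r ω t := by
  induction t with
  | zero => simpa [Nat.le_zero.1 h] using Finset.Subset.refl _
  | succ t ih =>
    rcases Nat.lt_or_ge s (t+1) with h' | h'
    · rw [Pro_succ]; exact (ih (Nat.lt_succ_iff.1 h')).trans Finset.subset_union_left
    · have : s = t+1 := le_antisymm h h'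
      subst this; exact Finset.Subset.refl _

lemma AP_mono {s t : ℕ} (h : s ≤ t) : AP G alg r ω s ⊆ AP G alg r ω t := by
  induction t with
  | zero => simpa [Nat.le_zero.1 h] using Finset.Subset.refl _
  | succ t ih =>
    rcases Nat.lt_or_ge s (t+1) with h' | h'
    · rw [AP_succ]; exact (ih (Nat.lt_succ_iff.1 h')).trans Finset.subset_union_left
    · have : s = t+1 := le_antisymm h h'
      subst this; exact Finset.Subset.refl _

lemma mem_Pro_iff {t e} : e ∈ Pro G alg r ω t ↔ ∃ s < t, e ∈ Mt G alg r ω s := by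
  induction t with
  | zero => simp [Pro_zero]
  | succ t ih =>
    rw [Pro_succ, Finset.mem_union, ih]
    constructor
    · rintro (⟨s, hs, h⟩ | h)
      · exact ⟨s, hs.trans (Nat.lt_succ_self t), h⟩
      · exact ⟨t, Nat.lt_succ_self t, h⟩
    · rintro ⟨s, hs, h⟩
      rcases Nat.lt_or_ge s t with h' | h'
      · exact Or.inl ⟨s, h', h⟩
      · have : s = t := le_antisymm (Nat.lt_succ_iff.1 hs) h'
        subst this; exact Or.inr h

lemma mem_AP_iff {t e} : e ∈ AP G alg r ω t ↔ ∃ s < t, e ∈ Nt G alg r ω s := by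
  induction t with
  | zero => simp [AP_zero]
  | succ t ih =>
    rw [AP_succ, Finset.mem_union, ih]
    constructor
    · rintro (⟨s, hs, h⟩ | h)
      · exact ⟨s, hs.trans (Nat.lt_succ_self t), h⟩
      · exact ⟨t, Nat.lt_succ_self t, h⟩
    · rintro ⟨s, hs, h⟩
      rcases Nat.lt_or_ge s t with h' | h'
      · exact Or.inl ⟨s, h', h⟩
      · have : s = t := le_antisymm (Nat.lt_succ_iff.1 hs) h'
        subst this; exact Or.inr h

/-- once blocked at a probe, never selected by `A`. -/
lemma blocked_never {t e} (h1 : e ∈ Pro G alg r ω t) (h2 : e ∉ AP G alg r ω t) :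
    ∀ u, e ∉ Nt G alg r ω u := by
  obtain ⟨s, hst, hM⟩ := (mem_Pro_iff G alg r ω).1 h1
  have hNotN : ∀ u < t, e ∉ Nt G alg r ω u := by
    intro u hu hN
    exact h2 ((mem_AP_iff G alg r ω).2 ⟨u, hu, hN⟩)
  have hNs : e ∉ Nt G alg r ω s := hNotN s hst
  have hnw : e ∉ nwt G alg r ω s := fun h => hNs (Finset.mem_union_right _ h)
  have hblk : ∃ c ∈ Ct G alg r ω s, ¬ Disjoint (G.ends e) (G.ends c) := by
    by_contra hc
    push_neg at hc
    exact hnw (Finset.mem_filter.2 ⟨hM, hc⟩)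
  obtain ⟨c, hc, hcd⟩ := hblk
  -- e is never in nwt u for u ≥ s
  have hnwu : ∀ u, s ≤ u → e ∉ nwt G alg r ω u := by
    intro u hu hmem
    exact hcd ((Finset.mem_filter.1 hmem).2 c (Ct_mono G alg r ω hu hc))
  -- e is never in Ct u for u ≥ s, hence never in Nt u for u ≥ s
  have hCt : ∀ u, s ≤ u → e ∉ Nt G alg r ω u := by
    have key : ∀ k, e ∉ Ct G alg r ω (s + k) ∧ e ∉ Nt G alg r ω (s + k) := by
      intro k
      induction k with
      | zero =>
        refine ⟨fun h => hNs (Ct_subset_Nt G alg r ω s h), hNs⟩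
      | succ k ih =>
        have hC : e ∉ Ct G alg r ω (s + k + 1) := by
          rw [Ct_succ]
          intro h
          exact ih.2 (Finset.filter_subset _ _ h)
        refine ⟨hC, fun h => ?_⟩
        rcases Finset.mem_union.1 h with h | h
        · exact hC h
        · exact hnwu _ (Nat.le_add_right s (k+1)) h
    intro u hu
    obtain ⟨k, rfl⟩ := Nat.exists_eq_add_of_le hu
    exact (key k).2
  intro u
  rcases Nat.lt_or_ge u s with h' | h'
  · exact hNotN u (h'.trans hst)
  · exact hCt u h'

/-- stability of the blocked set. -/
lemma blocked_stable {s t e} (hst : s ≤ t)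
    (h1 : e ∈ Pro G alg r ω s) (h2 : e ∉ AP G alg r ω s) :
    e ∈ Pro G alg r ω t ∧ e ∉ AP G alg r ω t := by
  refine ⟨Pro_mono G alg r ω hst h1, fun h => ?_⟩
  obtain ⟨u, _, hN⟩ := (mem_AP_iff G alg r ω).1 h
  exact blocked_never G alg r ω h1 h2 u hN

lemma nuAt_eq_on_pro {s t e} (hst : s ≤ t) (he : e ∈ Pro G alg r ω s) :
    nuAt G alg r ω t e = nuAt G alg r ω s e := by
  unfold nuAt
  by_cases h : e ∈ AP G alg r ω s
  · rw [if_neg, if_neg]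
    · simp [h]
    · simp only [Finset.mem_sdiff, not_and, not_not]
      intro _; exact AP_mono G alg r ω hst h
  · have := blocked_stable G alg r ω hst he h
    rw [if_pos, if_pos] <;> simp [Finset.mem_sdiff, he, h, this.1, this.2]

lemma Mt_subset_Pro_succ (t : ℕ) : Mt G alg r ω t ⊆ Pro G alg r ω (t+1) := by
  rw [Pro_succ]; exact Finset.subset_union_right

lemma Nt_subset_AP_succ (t : ℕ) : Nt G alg r ω t ⊆ AP G alg r ω (t+1) := by
  rw [AP_succ]; exact Finset.subset_union_right
end
section
variable {V E : Type} [DecidableEq V] [Fintype E] [DecidableEq E]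
variable (G : GraphEdges V E) (alg : (E → Bool) → ℕ → Finset E)
variable (r ω : E → Bool)

/-- Consistency: the algorithm's earlier selections are stable under the
evolving simulated realization. -/
lemma alg_nu_eq (halg : G.IsOnline alg) :
    ∀ s t, s ≤ t → alg (nuAt G alg r ω t) s = Mt G alg r ω s := by
  intro s
  induction s using Nat.strong_induction_on with
  | _ s ih =>
    intro t hst
    have h := halg.2 (nuAt G alg r ω s) (nuAt G alg r ω t) s (by
      intro s' hs' e he
      rw [ih s' hs' s (le_of_lt hs')] at he
      have hePro : e ∈ Pro G alg r ω (s'+1) := Mt_subset_Pro_succ G alg r ω s' he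
      rw [nuAt_eq_on_pro G alg r ω (hst.trans' hs') hePro,
          nuAt_eq_on_pro G alg r ω hs' hePro])
    exact h

lemma run_congr (halg : G.IsOnline alg) (r' ω' : E → Bool) (U : ℕ)
    (H1 : ∀ e ∈ Pro G alg r ω U \ AP G alg r ω U, r' e = r e)
    (H2 : ∀ e ∈ AP G alg r ω U, ω' e = ω e) :
    ∀ u ≤ U, runSt G alg r' ω' u = runSt G alg r ω u ∧
      Mt G alg r' ω' u = Mt G alg r ω u := by
  have Meq : ∀ v ≤ U, runSt G alg r' ω' v = runSt G alg r ω v →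
      Mt G alg r' ω' v = Mt G alg r ω v := by
    intro v hv hst
    have hPro : Pro G alg r' ω' v = Pro G alg r ω v := congrArg (fun x => x.2.1) hst
    have hAP : AP G alg r' ω' v = AP G alg r ω v := congrArg (fun x => x.2.2) hst
    have hnu : nuAt G alg r' ω' v =
        fun e => if e ∈ Pro G alg r ω v \ AP G alg r ω v then r' e else ω' e := by
      unfold nuAt; rw [hPro, hAP]
    show alg (nuAt G alg r' ω' v) v = alg (nuAt G alg r ω v) v
    rw [hnu]
    apply halg.2 (nuAt G alg r ω v) _ v
    intro s hs e he
    rw [alg_nu_eq G alg r ω halg s v (le_of_lt hs)] at he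
    have hePro : e ∈ Pro G alg r ω v :=
      Pro_mono G alg r ω hs (Mt_subset_Pro_succ G alg r ω s he)
    by_cases hA : e ∈ AP G alg r ω v
    · have hAU : e ∈ AP G alg r ω U := AP_mono G alg r ω hv hA
      have hnot : e ∉ Pro G alg r ω v \ AP G alg r ω v := by simp [hA]
      rw [if_neg hnot]
      show ω' e = nuAt G alg r ω v e
      unfold nuAt
      rw [if_neg hnot]
      exact H2 e hAU
    · have hb := blocked_stable G alg r ω hv hePro hA
      rw [if_pos (Finset.mem_sdiff.2 ⟨hePro, hA⟩)]
      show r' e = nuAt G alg r ω v e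
      unfold nuAt
      rw [if_pos (Finset.mem_sdiff.2 ⟨hePro, hA⟩)]
      exact H1 e (Finset.mem_sdiff.2 ⟨hb.1, hb.2⟩)
  intro u
  induction u with
  | zero => intro hu; exact ⟨rfl, Meq 0 (Nat.zero_le U) rfl⟩
  | succ u ih =>
    intro hu
    have hu' : u ≤ U := le_of_lt (lt_of_lt_of_le (Nat.lt_succ_self u) hu)
    obtain ⟨hst, hM⟩ := ih hu'
    have hCt : Ct G alg r' ω' u = Ct G alg r ω u := congrArg (fun x => x.1) hst
    have hPro : Pro G alg r' ω' u = Pro G alg r ω u := congrArg (fun x => x.2.1) hst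
    have hAP : AP G alg r' ω' u = AP G alg r ω u := congrArg (fun x => x.2.2) hst
    have hnw : nwt G alg r' ω' u = nwt G alg r ω u := by
      unfold nwt; rw [hM, hCt]
    have hNt : Nt G alg r' ω' u = Nt G alg r ω u := by
      unfold Nt; rw [hCt, hnw]
    have hCs : Ct G alg r' ω' (u+1) = Ct G alg r ω (u+1) := by
      rw [Ct_succ, Ct_succ, hNt]
      apply Finset.filter_congr
      intro e he
      have heAP : e ∈ AP G alg r ω U :=
        AP_mono G alg r ω hu (Nt_subset_AP_succ G alg r ω u he)
      simp [H2 e heAP]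
    have hPs : Pro G alg r' ω' (u+1) = Pro G alg r ω (u+1) := by
      rw [Pro_succ, Pro_succ, hPro, hM]
    have hAs : AP G alg r' ω' (u+1) = AP G alg r ω (u+1) := by
      rw [AP_succ, AP_succ, hAP, hNt]
    have hstS : runSt G alg r' ω' (u+1) = runSt G alg r ω (u+1) :=
      Prod.ext hCs (Prod.ext hPs hAs)
    exact ⟨hstS, Meq (u+1) hu hstS⟩

lemma Nt_congr (halg : G.IsOnline alg) (r' ω' : E → Bool) (U : ℕ)
    (H1 : ∀ e ∈ Pro G alg r ω U \ AP G alg r ω U, r' e = r e)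
    (H2 : ∀ e ∈ AP G alg r ω U, ω' e = ω e) :
    ∀ u ≤ U, Nt G alg r' ω' u = Nt G alg r ω u := by
  intro u hu
  obtain ⟨hst, hM⟩ := run_congr G alg r ω halg r' ω' U H1 H2 u hu
  have hCt : Ct G alg r' ω' u = Ct G alg r ω u := congrArg (fun x => x.1) hst
  unfold Nt nwt
  rw [hM, hCt]
end
section
variable {V E : Type} [DecidableEq V] [Fintype E] [DecidableEq E]
variable (G : GraphEdges V E) (alg : (E → Bool) → ℕ → Finset E)
variable (r ω : E → Bool)

lemma isMatching_subset {M N : Finset E} (h : G.IsMatching M) (hs : N ⊆ M) :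
    G.IsMatching N := fun e he f hf hef => h e (hs he) f (hs hf) hef

lemma Nt_matching (halg : G.IsOnline alg) : ∀ t, G.IsMatching (Nt G alg r ω t) := by
  have key : ∀ t, G.IsMatching (Ct G alg r ω t) → G.IsMatching (Nt G alg r ω t) := by
    intro t hC e he f hf hef
    rcases Finset.mem_union.1 he with heC | heN <;> rcases Finset.mem_union.1 hf with hfC | hfN
    · exact hC e heC f hfC hef
    · exact ((Finset.mem_filter.1 hfN).2 e heC).symm
    · exact (Finset.mem_filter.1 heN).2 f hfC
    · exact halg.1 _ t e (Finset.mem_filter.1 heN).1 f (Finset.mem_filter.1 hfN).1 hef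
  intro t
  induction t with
  | zero => exact key 0 (fun e he => by simp [Ct_zero] at he)
  | succ t ih =>
    apply key
    rw [Ct_succ]
    exact isMatching_subset G ih (Finset.filter_subset _ _)

lemma committing_Nt : ∀ (ω : E → Bool) (t s : ℕ), s < t → ∀ e ∈ Nt G alg r ω s,
    ω e = true → e ∈ Nt G alg r ω t := by
  intro ω t s hst e he hωe
  have h1 : e ∈ Ct G alg r ω (s+1) := by
    rw [Ct_succ]
    exact Finset.mem_filter.2 ⟨he, by simpa using hωe⟩
  exact Ct_subset_Nt G alg r ω t (Ct_mono G alg r ω (Nat.succ_le_of_lt hst) h1)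

lemma online_Nt (halg : G.IsOnline alg) :
    ∀ (ω ω' : E → Bool) (t : ℕ), (∀ s, s < t → ∀ e ∈ Nt G alg r ω s, ω' e = ω e) →
      Nt G alg r ω' t = Nt G alg r ω t := by
  intro ω ω' t h
  refine Nt_congr G alg r ω halg r ω' t (fun e _ => rfl) (fun e he => ?_) t le_rfl
  obtain ⟨s, hs, hN⟩ := (mem_AP_iff G alg r ω).1 he
  exact h s hs e hN
end
section
variable {V E : Type} [DecidableEq V] [Fintype E] [DecidableEq E]
variable (G : GraphEdges V E) (alg : (E → Bool) → ℕ → Finset E)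
variable (r ω : E → Bool)

lemma sdiff_card_le (halg : G.IsOnline alg) (t : ℕ) :
    (Mt G alg r ω t \ nwt G alg r ω t).card ≤ 2 * (Ct G alg r ω t).card := by
  classical
  set verts := (Ct G alg r ω t).biUnion G.ends with hverts
  have hne : ∀ e ∈ Mt G alg r ω t \ nwt G alg r ω t, (G.ends e ∩ verts).Nonempty := by
    intro e he
    obtain ⟨heM, henw⟩ := Finset.mem_sdiff.1 he
    have : ¬ ∀ c ∈ Ct G alg r ω t, Disjoint (G.ends e) (G.ends c) := by
      intro hall
      exact henw (Finset.mem_filter.2 ⟨heM, hall⟩)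
    push_neg at this
    obtain ⟨c, hc, hcd⟩ := this
    obtain ⟨v, hv1, hv2⟩ := Finset.not_disjoint_iff.1 hcd
    exact ⟨v, Finset.mem_inter.2 ⟨hv1, Finset.mem_biUnion.2 ⟨c, hc, hv2⟩⟩⟩
  have hdisj : ∀ e ∈ Mt G alg r ω t \ nwt G alg r ω t,
      ∀ f ∈ Mt G alg r ω t \ nwt G alg r ω t, e ≠ f →
        Disjoint (G.ends e ∩ verts) (G.ends f ∩ verts) := by
    intro e he f hf hef
    have := halg.1 (nuAt G alg r ω t) t e (Finset.mem_sdiff.1 he).1 f (Finset.mem_sdiff.1 hf).1 hef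
    exact this.mono Finset.inter_subset_left Finset.inter_subset_left
  calc (Mt G alg r ω t \ nwt G alg r ω t).card
      = ∑ e ∈ Mt G alg r ω t \ nwt G alg r ω t, 1 := by simp
    _ ≤ ∑ e ∈ Mt G alg r ω t \ nwt G alg r ω t, (G.ends e ∩ verts).card :=
        Finset.sum_le_sum (fun e he => Finset.card_pos.2 (hne e he))
    _ = ((Mt G alg r ω t \ nwt G alg r ω t).biUnion (fun e => G.ends e ∩ verts)).card :=
        (Finset.card_biUnion hdisj).symm
    _ ≤ verts.card := Finset.card_le_card
        (Finset.biUnion_subset.2 fun e _ => Finset.inter_subset_right)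
    _ ≤ ∑ c ∈ Ct G alg r ω t, (G.ends c).card := Finset.card_biUnion_le
    _ = 2 * (Ct G alg r ω t).card := by
        simp [G.card_ends, mul_comm]

lemma Nt_filter_card (t : ℕ) :
    ((Nt G alg r ω t).filter (fun e => ω e)).card
      = (Ct G alg r ω t).card + ((nwt G alg r ω t).filter (fun e => ω e)).card := by
  have hCt : (Ct G alg r ω t).filter (fun e => ω e) = Ct G alg r ω t :=
    Finset.filter_true_of_mem (fun e he => by simpa using mem_Ct_omega G alg r ω he)
  have hdisj : Disjoint (Ct G alg r ω t) ((nwt G alg r ω t).filter (fun e => ω e)) := by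
    rw [Finset.disjoint_left]
    intro e heC heN
    have hd : Disjoint (G.ends e) (G.ends e) :=
      (Finset.mem_filter.1 (Finset.mem_filter.1 heN).1).2 e heC
    have : G.ends e = ⊥ := disjoint_self.1 hd
    have h2 := G.card_ends e
    rw [this] at h2
    simp at h2
  rw [show Nt G alg r ω t = Ct G alg r ω t ∪ nwt G alg r ω t from rfl,
      Finset.filter_union, hCt, Finset.card_union_of_disjoint hdisj]

lemma round_card_le (halg : G.IsOnline alg) {T t : ℕ} (ht : t < T) :
    ((alg (nuAt G alg r ω T) t).filter (fun e => nuAt G alg r ω T e)).card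
      ≤ 2 * ((Nt G alg r ω t).filter (fun e => ω e)).card := by
  rw [alg_nu_eq G alg r ω halg t T (le_of_lt ht)]
  have hsub : (Mt G alg r ω t).filter (fun e => nuAt G alg r ω T e)
      ⊆ ((nwt G alg r ω t).filter (fun e => ω e)) ∪ (Mt G alg r ω t \ nwt G alg r ω t) := by
    intro e he
    obtain ⟨heM, heν⟩ := Finset.mem_filter.1 he
    by_cases hnw : e ∈ nwt G alg r ω t
    · have heAP : e ∈ AP G alg r ω T :=
        AP_mono G alg r ω (Nat.succ_le_of_lt ht)
          (Nt_subset_AP_succ G alg r ω t (Finset.mem_union_right _ hnw))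
      have : nuAt G alg r ω T e = ω e := by
        unfold nuAt
        rw [if_neg (by simp [heAP])]
      refine Finset.mem_union_left _ (Finset.mem_filter.2 ⟨hnw, ?_⟩)
      rw [← this]; exact heν
    · exact Finset.mem_union_right _ (Finset.mem_sdiff.2 ⟨heM, hnw⟩)
  calc ((Mt G alg r ω t).filter (fun e => nuAt G alg r ω T e)).card
      ≤ (((nwt G alg r ω t).filter (fun e => ω e)) ∪ (Mt G alg r ω t \ nwt G alg r ω t)).card :=
        Finset.card_le_card hsub
    _ ≤ ((nwt G alg r ω t).filter (fun e => ω e)).card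
          + (Mt G alg r ω t \ nwt G alg r ω t).card := Finset.card_union_le _ _
    _ ≤ ((nwt G alg r ω t).filter (fun e => ω e)).card + 2 * (Ct G alg r ω t).card := by
        have := sdiff_card_le G alg r ω halg t
        omega
    _ ≤ 2 * ((Nt G alg r ω t).filter (fun e => ω e)).card := by
        rw [Nt_filter_card G alg r ω t]
        omega
end
section
variable {V E : Type} [DecidableEq V] [Fintype E] [DecidableEq E]
variable (G : GraphEdges V E) (alg : (E → Bool) → ℕ → Finset E)

def Sblk (r ω : E → Bool) (T : ℕ) : Finset E := Pro G alg r ω T \ AP G alg r ω T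

lemma nuAt_eq_Sblk (r ω : E → Bool) (T : ℕ) (e : E) :
    nuAt G alg r ω T e = if e ∈ Sblk G alg r ω T then r e else ω e := rfl

lemma nuAt_idem (ν : E → Bool) (t : ℕ) : nuAt G alg ν ν t = ν := by
  funext e; simp [nuAt]

lemma fiberA (halg : G.IsOnline alg) (r ω : E → Bool) (T : ℕ) :
    ∀ u ≤ T, runSt G alg (nuAt G alg r ω T) (nuAt G alg r ω T) u = runSt G alg r ω u := by
  intro u hu
  refine (run_congr G alg r ω halg _ _ T (fun e he => ?_) (fun e he => ?_) u hu).1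
  · show nuAt G alg r ω T e = r e
    rw [nuAt_eq_Sblk G alg r ω T e]
    exact if_pos he
  · show nuAt G alg r ω T e = ω e
    rw [nuAt_eq_Sblk G alg r ω T e]
    refine if_neg ?_
    simp only [Sblk, Finset.mem_sdiff]
    exact fun h => h.2 he

lemma Sblk_fiberA (halg : G.IsOnline alg) (r ω : E → Bool) (T : ℕ) :
    Sblk G alg (nuAt G alg r ω T) (nuAt G alg r ω T) T = Sblk G alg r ω T := by
  have h := fiberA G alg halg r ω T T le_rfl
  unfold Sblk Pro AP
  rw [h]

lemma fiberB (halg : G.IsOnline alg) (ρ ν : E → Bool) (T : ℕ) :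
    (∀ u ≤ T, runSt G alg
        (fun e => if e ∈ Sblk G alg ν ν T then ν e else ρ e)
        (fun e => if e ∈ Sblk G alg ν ν T then ρ e else ν e) u = runSt G alg ν ν u) := by
  intro u hu
  refine (run_congr G alg ν ν halg _ _ T (fun e he => ?_) (fun e he => ?_) u hu).1
  · exact if_pos he
  · refine if_neg ?_
    simp only [Sblk, Finset.mem_sdiff]
    exact fun h => h.2 he

noncomputable def phiMap (T : ℕ) : ((E → Bool) × (E → Bool)) → ((E → Bool) × (E → Bool)) :=
  fun q => (fun e => if e ∈ Sblk G alg q.1 q.2 T then q.2 e else q.1 e, nuAt G alg q.1 q.2 T)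

noncomputable def psiMap (T : ℕ) : ((E → Bool) × (E → Bool)) → ((E → Bool) × (E → Bool)) :=
  fun q => (fun e => if e ∈ Sblk G alg q.2 q.2 T then q.2 e else q.1 e,
            fun e => if e ∈ Sblk G alg q.2 q.2 T then q.1 e else q.2 e)

lemma psi_phi (halg : G.IsOnline alg) (T : ℕ) (q : (E → Bool) × (E → Bool)) :
    psiMap G alg T (phiMap G alg T q) = q := by
  obtain ⟨r, ω⟩ := q
  have hS : Sblk G alg (nuAt G alg r ω T) (nuAt G alg r ω T) T = Sblk G alg r ω T :=
    Sblk_fiberA G alg halg r ω T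
  unfold psiMap phiMap
  simp only
  rw [hS]
  rw [Prod.mk.injEq]
  constructor
  · funext e
    by_cases h : e ∈ Sblk G alg r ω T
    · rw [if_pos h, nuAt_eq_Sblk G alg r ω T e, if_pos h]
    · rw [if_neg h, if_neg h]
  · funext e
    by_cases h : e ∈ Sblk G alg r ω T
    · rw [if_pos h, if_pos h]
    · rw [if_neg h, nuAt_eq_Sblk G alg r ω T e, if_neg h]

lemma phi_psi (halg : G.IsOnline alg) (T : ℕ) (q : (E → Bool) × (E → Bool)) :
    phiMap G alg T (psiMap G alg T q) = q := by
  obtain ⟨ρ, ν⟩ := q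
  set r' : E → Bool := fun e => if e ∈ Sblk G alg ν ν T then ν e else ρ e with hr'
  set ω' : E → Bool := fun e => if e ∈ Sblk G alg ν ν T then ρ e else ν e with hω'
  have hrun := fiberB G alg halg ρ ν T T le_rfl
  have hS : Sblk G alg r' ω' T = Sblk G alg ν ν T := by
    unfold Sblk Pro AP
    rw [hrun]
  have hnu : nuAt G alg r' ω' T = ν := by
    funext e
    rw [nuAt_eq_Sblk G alg r' ω' T e]
    by_cases h : e ∈ Sblk G alg r' ω' T
    · have h' : e ∈ Sblk G alg ν ν T := hS ▸ h
      rw [if_pos h]; simp only [hr', if_pos h']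
    · have h' : e ∉ Sblk G alg ν ν T := fun hc => h (hS.symm ▸ hc)
      rw [if_neg h]; simp only [hω', if_neg h']
  unfold phiMap psiMap
  simp only
  rw [Prod.mk.injEq]
  constructor
  · funext e
    show (if e ∈ Sblk G alg r' ω' T then ω' e else r' e) = ρ e
    by_cases h : e ∈ Sblk G alg ν ν T
    · rw [if_pos (hS.symm ▸ h)]
      simp only [hω', if_pos h]
    · rw [if_neg (fun hc => h (hS ▸ hc))]
      simp only [hr', if_neg h]
  · exact hnu

lemma phi_bijective (halg : G.IsOnline alg) (T : ℕ) :
    Function.Bijective (phiMap G alg T) :=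
  Function.bijective_iff_has_inverse.2
    ⟨psiMap G alg T, psi_phi G alg halg T, phi_psi G alg halg T⟩

lemma probOf_phi (p : E → ℝ) (T : ℕ) (q : (E → Bool) × (E → Bool)) :
    probOf p (phiMap G alg T q).1 * probOf p (phiMap G alg T q).2
      = probOf p q.1 * probOf p q.2 := by
  obtain ⟨r, ω⟩ := q
  unfold probOf
  rw [← Finset.prod_mul_distrib, ← Finset.prod_mul_distrib]
  refine Finset.prod_congr rfl (fun e _ => ?_)
  show (if (if e ∈ Sblk G alg r ω T then ω e else r e) then p e else 1 - p e) *
        (if nuAt G alg r ω T e then p e else 1 - p e) = _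
  rw [nuAt_eq_Sblk G alg r ω T e]
  by_cases h : e ∈ Sblk G alg r ω T
  · simp only [if_pos h]; ring
  · simp only [if_neg h]

lemma probOf_nonneg (p : E → ℝ) (hp : ∀ e, 0 ≤ p e ∧ p e ≤ 1) (ω : E → Bool) :
    0 ≤ probOf p ω := by
  refine Finset.prod_nonneg (fun e _ => ?_)
  by_cases h : ω e = true
  · rw [if_pos h]; exact (hp e).1
  · rw [if_neg h]; linarith [(hp e).2]

lemma probOf_sum_one (p : E → ℝ) : ∑ ω : E → Bool, probOf p ω = 1 := by
  unfold probOf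
  have h := Fintype.prod_sum (fun (e : E) (b : Bool) => if b then p e else 1 - p e)
  rw [← h]
  have : ∀ e : E, ∑ b : Bool, (if b then p e else 1 - p e) = 1 := by
    intro e; simp
  rw [Finset.prod_congr rfl (fun e _ => this e)]
  simp

lemma sum_nu (halg : G.IsOnline alg) (p : E → ℝ) (T : ℕ) (g : (E → Bool) → ℝ) :
    ∑ q : (E → Bool) × (E → Bool),
        probOf p q.1 * (probOf p q.2 * g (nuAt G alg q.1 q.2 T))
      = ∑ ν : E → Bool, probOf p ν * g ν := by
  have h1 : ∑ q : (E → Bool) × (E → Bool),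
      probOf p q.1 * (probOf p q.2 * g q.2)
      = ∑ ν : E → Bool, probOf p ν * g ν := by
    rw [Fintype.sum_prod_type]
    have : ∀ a : E → Bool, ∑ b : E → Bool, probOf p a * (probOf p b * g b)
        = probOf p a * ∑ b : E → Bool, probOf p b * g b := by
      intro a; rw [Finset.mul_sum]
    rw [Finset.sum_congr rfl (fun a _ => this a), ← Finset.sum_mul, probOf_sum_one, one_mul]
  rw [← h1, ← Function.Bijective.sum_comp (phi_bijective G alg halg T)
      (fun q => probOf p q.1 * (probOf p q.2 * g q.2))]
  refine Finset.sum_congr rfl (fun q _ => ?_)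
  have h2 : (phiMap G alg T q).2 = nuAt G alg q.1 q.2 T := rfl
  have h3 := probOf_phi G alg p T q
  rw [h2] at h3
  calc probOf p q.1 * (probOf p q.2 * g (nuAt G alg q.1 q.2 T))
      = (probOf p q.1 * probOf p q.2) * g (nuAt G alg q.1 q.2 T) := by ring
    _ = (probOf p (phiMap G alg T q).1 * probOf p (nuAt G alg q.1 q.2 T))
          * g (nuAt G alg q.1 q.2 T) := by rw [h3]
    _ = probOf p (phiMap G alg T q).1 * (probOf p ((phiMap G alg T q).2)
          * g ((phiMap G alg T q).2)) := by rw [h2]; ring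
end
section
variable {V E : Type} [DecidableEq V] [Fintype E] [DecidableEq E]
variable (G : GraphEdges V E) (alg : (E → Bool) → ℕ → Finset E)

lemma pointwise_reward_le (halg : G.IsOnline alg) (w : ℕ → ℝ) (hw : ∀ t, 0 ≤ w t)
    (r ω : E → Bool) (T : ℕ) :
    ∑ t ∈ Finset.range T, w t *
        (((alg (nuAt G alg r ω T) t).filter (fun e => nuAt G alg r ω T e)).card : ℝ)
      ≤ 2 * ∑ t ∈ Finset.range T, w t * (((Nt G alg r ω t).filter (fun e => ω e)).card : ℝ) := by
  rw [Finset.mul_sum]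
  apply Finset.sum_le_sum
  intro t ht
  have h := round_card_le G alg r ω halg (Finset.mem_range.1 ht)
  calc w t * (((alg (nuAt G alg r ω T) t).filter (fun e => nuAt G alg r ω T e)).card : ℝ)
      ≤ w t * ((2 * ((Nt G alg r ω t).filter (fun e => ω e)).card : ℕ) : ℝ) :=
        mul_le_mul_of_nonneg_left (Nat.cast_le.2 h) (hw t)
    _ = 2 * (w t * (((Nt G alg r ω t).filter (fun e => ω e)).card : ℝ)) := by
        push_cast; ring

theorem committing_half_approximates_opt'
    (p : E → ℝ) (hp : ∀ e, 0 ≤ p e ∧ p e ≤ 1)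
    (T : ℕ) (w : ℕ → ℝ) (hw : ∀ t, 0 ≤ w t)
    (halg : G.IsOnline alg) :
    ∃ a : (E → Bool) → ℕ → Finset E, G.IsOnline a ∧ IsCommitting a ∧
      (1 / 2 : ℝ) * expectedReward p w T alg ≤ expectedReward p w T a := by
  classical
  set R : (E → Bool) → ℝ := fun r => expectedReward p w T (fun ω t => Nt G alg r ω t) with hR
  have hkey : expectedReward p w T alg ≤ 2 * ∑ r : E → Bool, probOf p r * R r := by
    have hmeas := sum_nu G alg halg p T (fun ν => ∑ t ∈ Finset.range T,
      w t * (((alg ν t).filter (fun e => ν e)).card : ℝ))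
    have hER : expectedReward p w T alg = ∑ ν : E → Bool, probOf p ν *
        ∑ t ∈ Finset.range T, w t * (((alg ν t).filter (fun e => ν e)).card : ℝ) := rfl
    rw [hER, ← hmeas, Fintype.sum_prod_type]
    have hRHS : ∑ r : E → Bool, probOf p r * R r
        = ∑ r : E → Bool, ∑ ω : E → Bool, probOf p r * (probOf p ω *
            ∑ t ∈ Finset.range T, w t * (((Nt G alg r ω t).filter (fun e => ω e)).card : ℝ)) := by
      refine Finset.sum_congr rfl (fun r _ => ?_)
      have : R r = ∑ ω : E → Bool, probOf p ω *
          ∑ t ∈ Finset.range T, w t * (((Nt G alg r ω t).filter (fun e => ω e)).card : ℝ) := rfl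
      rw [this, Finset.mul_sum]
    rw [hRHS, Finset.mul_sum]
    apply Finset.sum_le_sum
    intro r _
    rw [Finset.mul_sum]
    apply Finset.sum_le_sum
    intro ω _
    have hpt := pointwise_reward_le G alg halg w hw r ω T
    have hnn : (0:ℝ) ≤ probOf p r * probOf p ω :=
      mul_nonneg (probOf_nonneg p hp r) (probOf_nonneg p hp ω)
    calc probOf p r * (probOf p ω * ∑ t ∈ Finset.range T, w t *
            (((alg (nuAt G alg r ω T) t).filter (fun e => nuAt G alg r ω T e)).card : ℝ))
        = (probOf p r * probOf p ω) * ∑ t ∈ Finset.range T, w t *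
            (((alg (nuAt G alg r ω T) t).filter (fun e => nuAt G alg r ω T e)).card : ℝ) := by ring
      _ ≤ (probOf p r * probOf p ω) * (2 * ∑ t ∈ Finset.range T, w t *
            (((Nt G alg r ω t).filter (fun e => ω e)).card : ℝ)) :=
          mul_le_mul_of_nonneg_left hpt hnn
      _ = 2 * (probOf p r * (probOf p ω * ∑ t ∈ Finset.range T, w t *
            (((Nt G alg r ω t).filter (fun e => ω e)).card : ℝ))) := by ring
  have hone : ∑ r : E → Bool, probOf p r = 1 := probOf_sum_one p
  have hex : ∃ r : E → Bool, (1/2 : ℝ) * expectedReward p w T alg ≤ R r := by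
    by_contra hc
    push_neg at hc
    set h2 : ℝ := (1/2 : ℝ) * expectedReward p w T alg with hh2
    have hsum0 : ∑ r : E → Bool, probOf p r * (h2 - R r) ≤ 0 := by
      have hexp : ∑ r : E → Bool, probOf p r * (h2 - R r)
          = h2 * (∑ r : E → Bool, probOf p r) - ∑ r : E → Bool, probOf p r * R r := by
        rw [Finset.mul_sum, ← Finset.sum_sub_distrib]
        refine Finset.sum_congr rfl (fun r _ => ?_)
        ring
      rw [hexp, hone]
      have : h2 ≤ ∑ r : E → Bool, probOf p r * R r := by
        rw [hh2]; linarith [hkey]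
      linarith
    have hnonneg : ∀ r ∈ (Finset.univ : Finset (E → Bool)), 0 ≤ probOf p r * (h2 - R r) :=
      fun r _ => mul_nonneg (probOf_nonneg p hp r) (by linarith [hc r])
    have hz : ∑ r : E → Bool, probOf p r * (h2 - R r) = 0 :=
      le_antisymm hsum0 (Finset.sum_nonneg hnonneg)
    have hall := (Finset.sum_eq_zero_iff_of_nonneg hnonneg).1 hz
    have hx : ∃ r : E → Bool, probOf p r ≠ 0 := by
      by_contra hall0
      push_neg at hall0
      rw [Finset.sum_eq_zero (fun r _ => hall0 r)] at hone
      norm_num at hone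
    obtain ⟨r0, hr0⟩ := hx
    have h0 := hall r0 (Finset.mem_univ r0)
    rcases mul_eq_zero.1 h0 with h | h
    · exact hr0 h
    · linarith [hc r0]
  obtain ⟨r, hr⟩ := hex
  refine ⟨fun ω t => Nt G alg r ω t,
    ⟨fun ω t => Nt_matching G alg r ω halg t,
     fun ω ω' t h => online_Nt G alg r halg ω ω' t h⟩,
    fun ω t s hst e he hωe => committing_Nt G alg r ω t s hst e he hωe, hr⟩
end

/-- For every online algorithm and nonnegative round weights,
some committing online algorithm attains at least half its expected reward. -/
theorem committing_half_approximates_opt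
    {V E : Type} [DecidableEq V] [Fintype E] [DecidableEq E]
    (G : GraphEdges V E) (p : E → ℝ) (hp : ∀ e, 0 ≤ p e ∧ p e ≤ 1)
    (T : ℕ) (w : ℕ → ℝ) (hw : ∀ t, 0 ≤ w t)
    (alg : (E → Bool) → ℕ → Finset E) (halg : G.IsOnline alg) :
    ∃ a : (E → Bool) → ℕ → Finset E, G.IsOnline a ∧ IsCommitting a ∧
      (1 / 2 : ℝ) * expectedReward p w T alg ≤ expectedReward p w T a :=
  committing_half_approximates_opt' G alg p hp T w hw halg
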